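/- Let d ≥ 1, p₀ > 1, C_V ≥ 1, and let V : ℝ^d → [0,∞) be continuously differentiable with |∇V(x)|^{p₀} ≤ C_V(1+V(x)) for all x ∈ ℝ^d. Then there exists a constant C > 0 such that V(x+h) ≤ C·(1 + V(x) + |h|^{p₀/(p₀−1)}) for all x, h ∈ ℝ^d. In particular there exists C₀ > 0 such that V(x) ≤ C₀·(1+|x|^{p₀/(p₀−1)}) for all x ∈ ℝ^d. -/

import Mathlib

open Real

/-- Remark 2.3: if `V ≥ 0` is `C¹` with `|∇V|^{p₀} ≤ C_V(1+V)`, then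
`V(x+h) ≤ C(1+V(x)+|h|^{p₀/(p₀-1)})` and in particular `V` has polynomial growth
`V(x) ≤ C₀(1+|x|^{p₀/(p₀-1)})`. -/
theorem polynomial_growth_of_potential
    (d : ℕ) (hd : 1 ≤ d) (p₀ C_V : ℝ) (hp₀ : 1 < p₀) (hCV : 1 ≤ C_V)
    (V : EuclideanSpace ℝ (Fin d) → ℝ)
    (hV : ContDiff ℝ 1 V) (hV0 : ∀ x, 0 ≤ V x)
    (hgrad : ∀ x, ‖gradient V x‖ ^ p₀ ≤ C_V * (1 + V x)) :
    (∃ C > (0 : ℝ), ∀ x h : EuclideanSpace ℝ (Fin d),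
      V (x + h) ≤ C * (1 + V x + ‖h‖ ^ (p₀ / (p₀ - 1)))) ∧
    (∃ C₀ > (0 : ℝ), ∀ x : EuclideanSpace ℝ (Fin d),
      V x ≤ C₀ * (1 + ‖x‖ ^ (p₀ / (p₀ - 1)))) := by
  have hp0 : (0:ℝ) < p₀ := lt_trans one_pos hp₀
  have hp1 : (0:ℝ) < p₀ - 1 := by linarith
  set α : ℝ := 1 - 1/p₀ with hαdef
  have hα0 : 0 < α := by
    have : 1/p₀ < 1 := by rw [div_lt_one hp0]; linarith
    simp only [hαdef]; linarith
  set q : ℝ := p₀ / (p₀ - 1) with hqdef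
  have hq0 : 0 < q := div_pos hp0 hp1
  have hαq : α * q = 1 := by
    rw [hαdef, hqdef, one_sub_div hp0.ne', div_mul_div_comm, mul_comm (p₀ - 1),
      div_self (mul_ne_zero hp0.ne' hp1.ne')]
  have hCV0 : (0:ℝ) < C_V := lt_of_lt_of_le one_pos hCV
  have hW1 : ∀ y, (1:ℝ) ≤ 1 + V y := fun y => le_add_of_nonneg_right (hV0 y)
  have hW0 : ∀ y, (0:ℝ) < 1 + V y := fun y => lt_of_lt_of_le one_pos (hW1 y)
  have hVd : Differentiable ℝ V := hV.differentiable one_ne_zero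
  -- gradient norm bound
  have hgnorm : ∀ y, ‖gradient V y‖ ≤ C_V ^ (1/p₀) * (1 + V y) ^ (1/p₀) := by
    intro y
    have h1 : (0:ℝ) ≤ 1/p₀ := by positivity
    have h2 := Real.rpow_le_rpow (Real.rpow_nonneg (norm_nonneg _) _) (hgrad y) h1
    rwa [← Real.rpow_mul (norm_nonneg _), mul_one_div, div_self hp0.ne', Real.rpow_one,
      Real.mul_rpow hCV0.le (hW0 y).le] at h2
  -- fderiv applied to h is the inner product with the gradient
  have hfg : ∀ y (k : EuclideanSpace ℝ (Fin d)),
      fderiv ℝ V y k ≤ ‖gradient V y‖ * ‖k‖ := by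
    intro y k
    have : fderiv ℝ V y k = (inner ℝ (gradient V y) k : ℝ) := by
      rw [gradient, InnerProductSpace.toDual_symm_apply]
    rw [this]
    exact real_inner_le_norm _ _
  -- key estimate via MVT
  have key : ∀ x h : EuclideanSpace ℝ (Fin d),
      (1 + V (x + h)) ^ α ≤ (1 + V x) ^ α + α * C_V ^ (1/p₀) * ‖h‖ := by
    intro x h
    set u : ℝ → ℝ := fun s => 1 + V (x + s • h) with hudef
    set φ : ℝ → ℝ := fun s => u s ^ α with hφdef
    have hline : ∀ t : ℝ, HasDerivAt (fun s : ℝ => x + s • h) h t := by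
      intro t
      simpa using ((hasDerivAt_id t).smul_const h).const_add x
    have hu : ∀ t, HasDerivAt u (fderiv ℝ V (x + t • h) h) t := by
      intro t
      simpa [hudef] using
        (((hVd (x + t • h)).hasFDerivAt.comp_hasDerivAt t (hline t)).const_add 1)
    have hφ : ∀ t, HasDerivAt φ
        (fderiv ℝ V (x + t • h) h * α * u t ^ (α - 1)) t := by
      intro t
      exact (hu t).rpow_const (Or.inl (hW0 _).ne')
    have hbound : ∀ t : ℝ,
        fderiv ℝ V (x + t • h) h * α * u t ^ (α - 1) ≤ α * C_V ^ (1/p₀) * ‖h‖ := by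
      intro t
      have hut : u t = 1 + V (x + t • h) := rfl
      have h1 : fderiv ℝ V (x + t • h) h ≤ C_V ^ (1/p₀) * (u t) ^ (1/p₀) * ‖h‖ := by
        calc fderiv ℝ V (x + t • h) h ≤ ‖gradient V (x + t • h)‖ * ‖h‖ := hfg _ _
        _ ≤ C_V ^ (1/p₀) * (u t) ^ (1/p₀) * ‖h‖ := by
            apply mul_le_mul_of_nonneg_right _ (norm_nonneg _)
            rw [hut]; exact hgnorm _
      have hupos : 0 < u t := hW0 _
      have hpow : u t ^ (α - 1) * u t ^ (1/p₀) = 1 := by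
        rw [← Real.rpow_add hupos]
        have : α - 1 + 1/p₀ = 0 := by simp [hαdef]
        rw [this, Real.rpow_zero]
      have hpow_pos : 0 < u t ^ (α - 1) := Real.rpow_pos_of_pos hupos _
      calc fderiv ℝ V (x + t • h) h * α * u t ^ (α - 1)
          ≤ (C_V ^ (1/p₀) * (u t) ^ (1/p₀) * ‖h‖) * α * u t ^ (α - 1) := by
            apply mul_le_mul_of_nonneg_right _ hpow_pos.le
            exact mul_le_mul_of_nonneg_right h1 hα0.le
        _ = α * C_V ^ (1/p₀) * ‖h‖ * (u t ^ (α - 1) * u t ^ (1/p₀)) := by ring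
        _ = α * C_V ^ (1/p₀) * ‖h‖ := by rw [hpow, mul_one]
    have hcont : ContinuousOn φ (Set.Icc 0 1) :=
      (continuous_iff_continuousAt.2 fun t => (hφ t).continuousAt).continuousOn
    obtain ⟨c, _, hceq⟩ := exists_hasDerivAt_eq_slope φ
      (fun t => fderiv ℝ V (x + t • h) h * α * u t ^ (α - 1)) one_pos hcont
      (fun t _ => hφ t)
    have hphi1 : φ 1 = (1 + V (x + h)) ^ α := by simp [hφdef, hudef]
    have hphi0 : φ 0 = (1 + V x) ^ α := by simp [hφdef, hudef]
    have : φ 1 - φ 0 ≤ α * C_V ^ (1/p₀) * ‖h‖ := by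
      rw [show φ 1 - φ 0 = (φ 1 - φ 0) / (1 - 0) by norm_num, ← hceq]
      exact hbound c
    rw [hphi1, hphi0] at this
    linarith
  -- derive part 1
  set M : ℝ := (α * C_V ^ (1/p₀)) ^ q with hMdef
  have hM0 : 0 ≤ M := Real.rpow_nonneg (by positivity) _
  set C : ℝ := 2 ^ q * (1 + M) with hCdef
  have hC0 : 0 < C := by positivity
  have part1 : ∀ x h : EuclideanSpace ℝ (Fin d),
      V (x + h) ≤ C * (1 + V x + ‖h‖ ^ q) := by
    intro x h
    have hA := key x h
    set a : ℝ := (1 + V x) ^ α with hadef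
    set b : ℝ := α * C_V ^ (1/p₀) * ‖h‖ with hbdef
    have ha0 : 0 ≤ a := Real.rpow_nonneg (hW0 x).le _
    have hb0 : 0 ≤ b := by positivity
    have hab : a + b ≤ 2 * max a b := by
      rcases le_total a b with hl | hl
      · rw [max_eq_right hl]; linarith
      · rw [max_eq_left hl]; linarith
    have hmax0 : 0 ≤ max a b := le_max_of_le_left ha0
    have step1 : 1 + V (x + h) ≤ (a + b) ^ q := by
      have h1 : ((1 + V (x + h)) ^ α) ^ q ≤ (a + b) ^ q :=
        Real.rpow_le_rpow (Real.rpow_nonneg (hW0 _).le _) hA hq0.le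
      rwa [← Real.rpow_mul (hW0 _).le, hαq, Real.rpow_one] at h1
    have step2 : (a + b) ^ q ≤ 2 ^ q * (a ^ q + b ^ q) := by
      calc (a + b) ^ q ≤ (2 * max a b) ^ q :=
            Real.rpow_le_rpow (by linarith) hab hq0.le
        _ = 2 ^ q * (max a b) ^ q := Real.mul_rpow (by norm_num) hmax0
        _ ≤ 2 ^ q * (a ^ q + b ^ q) := by
            apply mul_le_mul_of_nonneg_left _ (Real.rpow_nonneg (by norm_num) _)
            rcases le_total a b with hl | hl
            · rw [max_eq_right hl]
              have : 0 ≤ a ^ q := Real.rpow_nonneg ha0 _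
              linarith
            · rw [max_eq_left hl]
              have : 0 ≤ b ^ q := Real.rpow_nonneg hb0 _
              linarith
    have haq : a ^ q = 1 + V x := by
      rw [hadef, ← Real.rpow_mul (hW0 x).le, hαq, Real.rpow_one]
    have hbq : b ^ q = M * ‖h‖ ^ q := by
      rw [hbdef, Real.mul_rpow (by positivity) (norm_nonneg _), hMdef]
    have hfinal : 1 + V (x + h) ≤ 2 ^ q * (1 + V x) + 2 ^ q * M * ‖h‖ ^ q := by
      calc 1 + V (x + h) ≤ (a + b) ^ q := step1
        _ ≤ 2 ^ q * (a ^ q + b ^ q) := step2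
        _ = 2 ^ q * (1 + V x) + 2 ^ q * M * ‖h‖ ^ q := by rw [haq, hbq]; ring
    have h2q : (1:ℝ) ≤ 2 ^ q := by
      rw [show (1:ℝ) = 2 ^ (0:ℝ) by simp]
      exact Real.rpow_le_rpow_left_iff (by norm_num) |>.2 hq0.le
    have hWx : 0 ≤ 1 + V x := (hW0 x).le
    have hhq : 0 ≤ ‖h‖ ^ q := Real.rpow_nonneg (norm_nonneg _) _
    have : 2 ^ q * (1 + V x) + 2 ^ q * M * ‖h‖ ^ q ≤ C * (1 + V x + ‖h‖ ^ q) := by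
      have t0 : (0:ℝ) ≤ 2 ^ q := Real.rpow_nonneg (by norm_num) q
      nlinarith [mul_nonneg t0 hhq, mul_nonneg (mul_nonneg t0 hM0) hWx]
    have hVle : V (x + h) ≤ 1 + V (x + h) := by linarith [hV0 (x + h)]
    linarith
  refine ⟨⟨C, hC0, part1⟩, ?_⟩
  refine ⟨C * (1 + V 0), mul_pos hC0 (hW0 0), fun x => ?_⟩
  have h1 := part1 0 x
  rw [zero_add] at h1
  have hhq : 0 ≤ ‖x‖ ^ q := Real.rpow_nonneg (norm_nonneg _) _
  have hV00 : 0 ≤ V 0 := hV0 0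
  nlinarith [mul_nonneg (mul_nonneg hC0.le hV00) hhq]
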